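/- arXiv:math/0501445 — 4 statements merged into one kernel-verified Lean document; each statement's English description precedes it below -/
import Mathlib

section
/- (Expansion identity for the multi-scale test function.) Let Ω ⊂ ℝ^{n−1} (n = 2 or 3) be a rectangle, f ∈ C², and let U ∈ C³(ℝ) satisfy U'' − c₀U' + f(U) = 0. Let b : Ω → ℝ be continuous with mean zero, and let χ ∈ C²(Ω) solve −Δχ = b with zero Neumann condition. Set a₀ = (1/|Ω|)∫_Ω |∇χ|², α = −a₀/2, γ = c₀ a₀/2. Let ũ ∈ C²(ℝ × Ω) solve Δ_{ξ,x̃} ũ − c₀ ũ_ξ + f'(U(ξ)) ũ = (a₀ − |∇χ(x̃)|²) U''(ξ) with zero Neumann condition on ℝ × ∂Ω. For δ > 0 define ξ = (1 + αδ²)x₁ + δχ(x̃) and v(x₁, x̃) = U(ξ) + δ² ũ(ξ, x̃). Then for all x = (x₁, x̃): Δ_x v + δ b(x̃) ∂_{x₁} v + f(v) − (c₀ + δ²γ) ∂_{x₁} v = δ³A + δ⁴B + δ⁵D + δ⁶E + [f(v) − f(U) − f'(U) δ² ũ], where all terms on the right are evaluated at (ξ, x̃) and A = b α U' + 2 ∇_{x̃}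 ũ_ξ · ∇χ, B = α² U'' + 2α ũ_{ξξ} + ũ_{ξξ}|∇χ|² − γα U' − c₀ α ũ_ξ − γ ũ_ξ, D = α b ũ_ξ, E = α² ũ_{ξξ} − αγ ũ_ξ. -/
open MeasureTheory

noncomputable section

/-- Partial derivative of `g : ℝ^m → ℝ` in the `i`-th coordinate direction. -/
def pd {m : ℕ} (i : Fin m) (g : (Fin m → ℝ) → ℝ) (x : Fin m → ℝ) : ℝ :=
  deriv (fun t : ℝ => g (Function.update x i t)) (x i)

/-- Cross-sectional Laplacian `Δ_{x̃} g = ∑ᵢ ∂ᵢᵢ g`. -/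
def lapT {m : ℕ} (g : (Fin m → ℝ) → ℝ) (x : Fin m → ℝ) : ℝ :=
  ∑ i : Fin m, pd i (pd i g) x

/-- `|∇χ|² = ∑ᵢ (∂ᵢχ)²`. -/
def gradSq {m : ℕ} (g : (Fin m → ℝ) → ℝ) (x : Fin m → ℝ) : ℝ :=
  ∑ i : Fin m, (pd i g x) ^ 2

/-- Partial derivative in the first (scalar) variable of `w : ℝ × ℝ^m → ℝ`. -/
def axD {m : ℕ} (w : ℝ × (Fin m → ℝ) → ℝ) (z : ℝ × (Fin m → ℝ)) : ℝ :=
  deriv (fun t : ℝ => w (t, z.2)) z.1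

/-- Full Laplacian of `w : ℝ × ℝ^m → ℝ` in all variables. -/
def lapFull {m : ℕ} (w : ℝ × (Fin m → ℝ) → ℝ) (z : ℝ × (Fin m → ℝ)) : ℝ :=
  deriv (fun t : ℝ => axD w (t, z.2)) z.1 + lapT (fun y => w (z.1, y)) z.2

section auxiliary

variable {m : ℕ}

private lemma prod_decomp (a : ℝ) (p : Fin m → ℝ) :
    ((a, p) : ℝ × (Fin m → ℝ)) = a • ((1 : ℝ), (0 : Fin m → ℝ)) + ((0 : ℝ), p) := by
  simp [Prod.ext_iff]

private lemma lin_expand (L : (ℝ × (Fin m → ℝ)) →L[ℝ] ℝ) (a : ℝ) (p : Fin m → ℝ) :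
    L (a, p) = a * L (1, 0) + L (0, p) := by
  rw [prod_decomp a p, map_add, L.map_smul, smul_eq_mul]

private lemma lin_expand0 (L : (ℝ × (Fin m → ℝ)) →L[ℝ] ℝ) (a : ℝ) :
    L (a, (0 : Fin m → ℝ)) = a * L (1, 0) := by
  rw [lin_expand, Prod.mk_zero_zero, map_zero, add_zero]

private lemma bilin_expand (B : (ℝ × (Fin m → ℝ)) →L[ℝ] (ℝ × (Fin m → ℝ)) →L[ℝ] ℝ)
    (a b : ℝ) (p q : Fin m → ℝ) :
    B (a, p) (b, q) = a * b * B (1, 0) (1, 0) + a * B (1, 0) (0, q)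
      + b * B (0, p) (1, 0) + B (0, p) (0, q) := by
  rw [prod_decomp a p, map_add, B.map_smul]
  rw [ContinuousLinearMap.add_apply, ContinuousLinearMap.smul_apply]
  rw [lin_expand (B (1, 0)) b q, lin_expand (B (0, p)) b q]
  simp only [smul_eq_mul]; ring

private lemma bilin_expand00 (B : (ℝ × (Fin m → ℝ)) →L[ℝ] (ℝ × (Fin m → ℝ)) →L[ℝ] ℝ)
    (a b : ℝ) :
    B (a, (0 : Fin m → ℝ)) (b, (0 : Fin m → ℝ)) = a * b * B (1, 0) (1, 0) := by
  rw [bilin_expand]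
  simp [Prod.mk_zero_zero]

private lemma pd_eq_fderiv {i : Fin m} {g : (Fin m → ℝ) → ℝ} {y : Fin m → ℝ}
    (hg : DifferentiableAt ℝ g y) :
    pd i g y = fderiv ℝ g y (Pi.single i 1) := by
  exact (hg.hasFDerivAt.comp_hasDerivAt_of_eq (y i) (hasDerivAt_update y i (y i))
      (Function.update_eq_self i y).symm).deriv

private lemma axD_eq_fderiv {w : ℝ × (Fin m → ℝ) → ℝ} {z : ℝ × (Fin m → ℝ)}
    (hw : DifferentiableAt ℝ w z) :
    axD w z = fderiv ℝ w z (1, 0) := by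
  exact (hw.hasFDerivAt.comp_hasDerivAt_of_eq z.1
      ((hasDerivAt_id z.1).prodMk (hasDerivAt_const z.1 z.2)) rfl).deriv

end auxiliary

/-- **Expansion identity for the multi-scale test function.**
With `ξ = (1 + αδ²)x₁ + δχ(x̃)` and `v = U(ξ) + δ²ũ(ξ, x̃)`, where
`−Δχ = b` (zero Neumann), `ũ` solves the corrector equation
`Δ_{ξ,x̃}ũ − c₀ũ_ξ + f'(U)ũ = (a₀ − |∇χ|²)U''` (zero Neumann),
`a₀ = ⟨|∇χ|²⟩`, `α = −a₀/2`, `γ = c₀a₀/2`, one has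
`Δv + δb∂₁v + f(v) − (c₀ + δ²γ)∂₁v = δ³A + δ⁴B + δ⁵D + δ⁶E + [f(v) − f(U) − f'(U)δ²ũ]`. -/
theorem multiscale_expansion_identity
    {m : ℕ} (hm : m = 1 ∨ m = 2)
    (lo hi : Fin m → ℝ) (hrect : ∀ i, lo i < hi i)
    (f : ℝ → ℝ) (hf : ContDiff ℝ 2 f)
    (U : ℝ → ℝ) (hU : ContDiff ℝ 3 U) (c₀ : ℝ)
    (hode : ∀ ξ : ℝ, deriv (deriv U) ξ - c₀ * deriv U ξ + f (U ξ) = 0)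
    (b : (Fin m → ℝ) → ℝ) (hb : Continuous b)
    (hbmean : ∫ x in Set.Icc lo hi, b x = 0)
    (χ : (Fin m → ℝ) → ℝ) (hχ : ContDiff ℝ 2 χ)
    (hχeq : ∀ x ∈ Set.Icc lo hi, -(lapT χ x) = b x)
    (hχN : ∀ x ∈ Set.Icc lo hi, ∀ i : Fin m,
      (x i = lo i ∨ x i = hi i) → pd i χ x = 0)
    (a₀ α γ : ℝ)
    (ha₀ : a₀ = (1 / (volume (Set.Icc lo hi)).toReal) * ∫ x in Set.Icc lo hi, gradSq χ x)
    (hα : α = -a₀ / 2) (hγ : γ = c₀ * a₀ / 2)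
    (ut : ℝ × (Fin m → ℝ) → ℝ) (hut : ContDiff ℝ 2 ut)
    (hutEq : ∀ ξ : ℝ, ∀ x ∈ Set.Icc lo hi,
      lapFull ut (ξ, x) - c₀ * axD ut (ξ, x) + deriv f (U ξ) * ut (ξ, x)
        = (a₀ - gradSq χ x) * deriv (deriv U) ξ)
    (hutN : ∀ ξ : ℝ, ∀ x ∈ Set.Icc lo hi, ∀ i : Fin m,
      (x i = lo i ∨ x i = hi i) → pd i (fun y => ut (ξ, y)) x = 0)
    (δ : ℝ) (hδ : 0 < δ)
    (v : ℝ × (Fin m → ℝ) → ℝ)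
    (hv : v = fun z : ℝ × (Fin m → ℝ) =>
      U ((1 + α * δ ^ 2) * z.1 + δ * χ z.2)
        + δ ^ 2 * ut ((1 + α * δ ^ 2) * z.1 + δ * χ z.2, z.2)) :
    ∀ x₁ : ℝ, ∀ xt ∈ Set.Icc lo hi,
      lapFull v (x₁, xt) + δ * b xt * axD v (x₁, xt) + f (v (x₁, xt))
          - (c₀ + δ ^ 2 * γ) * axD v (x₁, xt)
        = (let ξ : ℝ := (1 + α * δ ^ 2) * x₁ + δ * χ xt
           δ ^ 3 * (b xt * α * deriv U ξ
                + 2 * ∑ i : Fin m, pd i (fun y => axD ut (ξ, y)) xt * pd i χ xt)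
            + δ ^ 4 * (α ^ 2 * deriv (deriv U) ξ
                + 2 * α * axD (axD ut) (ξ, xt)
                + axD (axD ut) (ξ, xt) * gradSq χ xt
                - γ * α * deriv U ξ - c₀ * α * axD ut (ξ, xt) - γ * axD ut (ξ, xt))
            + δ ^ 5 * (α * b xt * axD ut (ξ, xt))
            + δ ^ 6 * (α ^ 2 * axD (axD ut) (ξ, xt) - α * γ * axD ut (ξ, xt))
            + (f (v (x₁, xt)) - f (U ξ) - deriv f (U ξ) * (δ ^ 2 * ut (ξ, xt)))) := by
  intro x₁ xt hxt
  dsimp only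
  -- differentiability facts
  have hUd : Differentiable ℝ U := hU.differentiable (by norm_num)
  have hU2 : ContDiff ℝ 2 (deriv U) := by
    have h := (contDiff_succ_iff_deriv (n := 2) (f := U)).mp (by exact_mod_cast hU)
    exact h.2.2
  have hU'd : Differentiable ℝ (deriv U) := hU2.differentiable (by norm_num)
  have hχd : Differentiable ℝ χ := hχ.differentiable (by norm_num)
  have hc1d : Differentiable ℝ (fderiv ℝ χ) :=
    (hχ.fderiv_right (by norm_num) : ContDiff ℝ 1 (fderiv ℝ χ)).differentiable one_ne_zero
  have hutd : Differentiable ℝ ut := hut.differentiable (by norm_num)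
  have hFd : Differentiable ℝ (fderiv ℝ ut) :=
    (hut.fderiv_right (by norm_num) : ContDiff ℝ 1 (fderiv ℝ ut)).differentiable one_ne_zero
  have hsym : ∀ (z' : ℝ × (Fin m → ℝ)) (vv ww : ℝ × (Fin m → ℝ)),
      fderiv ℝ (fderiv ℝ ut) z' vv ww = fderiv ℝ (fderiv ℝ ut) z' ww vv :=
    fun z' => hut.contDiffAt.isSymmSndFDerivAt (by simp [minSmoothness_of_isRCLikeNormedField])
  -- the basic affine curve in the first variable
  have hlin : ∀ (t : ℝ) (y : Fin m → ℝ),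
      HasDerivAt (fun s : ℝ => (1 + α * δ ^ 2) * s + δ * χ y) (1 + α * δ ^ 2) t := by
    intro t y
    simpa using ((hasDerivAt_id t).const_mul (1 + α * δ ^ 2)).add_const (δ * χ y)
  -- first partial of v in the axial variable
  have hA : ∀ (t : ℝ) (y : Fin m → ℝ),
      axD v (t, y) = deriv U ((1 + α * δ ^ 2) * t + δ * χ y) * (1 + α * δ ^ 2)
        + δ ^ 2 * fderiv ℝ ut ((1 + α * δ ^ 2) * t + δ * χ y, y)
            ((1 + α * δ ^ 2, 0) : ℝ × (Fin m → ℝ)) := by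
    intro t y
    rw [hv]
    have h1 : HasDerivAt (fun s : ℝ => U ((1 + α * δ ^ 2) * s + δ * χ y))
        (deriv U ((1 + α * δ ^ 2) * t + δ * χ y) * (1 + α * δ ^ 2)) t :=
      (hUd _).hasDerivAt.comp t (hlin t y)
    have h2 : HasDerivAt (fun s : ℝ => (((1 + α * δ ^ 2) * s + δ * χ y : ℝ), y))
        (((1 + α * δ ^ 2 : ℝ), (0 : Fin m → ℝ))) t := (hlin t y).prodMk (hasDerivAt_const t y)
    have h3 := (hutd _).hasFDerivAt.comp_hasDerivAt t h2
    exact (h1.add (h3.const_mul (δ ^ 2))).deriv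
  -- second axial derivative of v
  have hB : deriv (fun t => axD v (t, xt)) x₁
      = deriv (deriv U) ((1 + α * δ ^ 2) * x₁ + δ * χ xt) * (1 + α * δ ^ 2) * (1 + α * δ ^ 2)
        + δ ^ 2 * ((1 + α * δ ^ 2) * (1 + α * δ ^ 2)
            * fderiv ℝ (fderiv ℝ ut) ((1 + α * δ ^ 2) * x₁ + δ * χ xt, xt) (1, 0) (1, 0)) := by
    have hfun : (fun t => axD v (t, xt)) = fun t =>
        deriv U ((1 + α * δ ^ 2) * t + δ * χ xt) * (1 + α * δ ^ 2)
          + δ ^ 2 * fderiv ℝ ut ((1 + α * δ ^ 2) * t + δ * χ xt, xt)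
              ((1 + α * δ ^ 2, 0) : ℝ × (Fin m → ℝ)) :=
      funext fun t => hA t xt
    rw [hfun]
    have h1 : HasDerivAt (fun t : ℝ => deriv U ((1 + α * δ ^ 2) * t + δ * χ xt))
        (deriv (deriv U) ((1 + α * δ ^ 2) * x₁ + δ * χ xt) * (1 + α * δ ^ 2)) x₁ :=
      (hU'd _).hasDerivAt.comp x₁ (hlin x₁ xt)
    have h2 : HasDerivAt (fun t : ℝ => (((1 + α * δ ^ 2) * t + δ * χ xt : ℝ), xt))
        (((1 + α * δ ^ 2 : ℝ), (0 : Fin m → ℝ))) x₁ := (hlin x₁ xt).prodMk (hasDerivAt_const x₁ xt)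
    have h3 := (hFd _).hasFDerivAt.comp_hasDerivAt x₁ h2
    have h4 := h3.clm_apply (hasDerivAt_const x₁ ((1 + α * δ ^ 2, 0) : ℝ × (Fin m → ℝ)))
    have h5 := ((h1.mul_const (1 + α * δ ^ 2)).add (h4.const_mul (δ ^ 2))).deriv
    refine h5.trans ?_
    rw [map_zero, add_zero, bilin_expand00]
  -- first cross-sectional partials of v
  have hC : ∀ (i : Fin m) (y : Fin m → ℝ),
      pd i (fun y' => v (x₁, y')) y
        = deriv U ((1 + α * δ ^ 2) * x₁ + δ * χ y) * (δ * fderiv ℝ χ y (Pi.single i 1))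
          + δ ^ 2 * fderiv ℝ ut ((1 + α * δ ^ 2) * x₁ + δ * χ y, y)
              ((δ * fderiv ℝ χ y (Pi.single i 1), Pi.single i 1) : ℝ × (Fin m → ℝ)) := by
    intro i y
    rw [hv]
    have hup : HasDerivAt (Function.update y i) (Pi.single i (1 : ℝ)) (y i) :=
      hasDerivAt_update y i (y i)
    have hχc : HasDerivAt (fun t => χ (Function.update y i t))
        (fderiv ℝ χ y (Pi.single i 1)) (y i) :=
      (hχd y).hasFDerivAt.comp_hasDerivAt_of_eq (y i) hup (Function.update_eq_self i y).symm
    have hsc : HasDerivAt (fun t => (1 + α * δ ^ 2) * x₁ + δ * χ (Function.update y i t))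
        (δ * fderiv ℝ χ y (Pi.single i 1)) (y i) :=
      (hχc.const_mul δ).const_add ((1 + α * δ ^ 2) * x₁)
    have h1 : HasDerivAt (fun t => U ((1 + α * δ ^ 2) * x₁ + δ * χ (Function.update y i t)))
        (deriv U ((1 + α * δ ^ 2) * x₁ + δ * χ y) * (δ * fderiv ℝ χ y (Pi.single i 1)))
        (y i) := by
      have h := (hUd _).hasDerivAt.comp (y i) hsc
      simpa only [Function.update_eq_self, Function.comp_def] using h
    have h2 : HasDerivAt
        (fun t => (((1 + α * δ ^ 2) * x₁ + δ * χ (Function.update y i t) : ℝ),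
          Function.update y i t))
        (((δ * fderiv ℝ χ y (Pi.single i 1), Pi.single i 1)) : ℝ × (Fin m → ℝ)) (y i) :=
      hsc.prodMk hup
    have h3 : HasDerivAt
        (fun t => ut (((1 + α * δ ^ 2) * x₁ + δ * χ (Function.update y i t) : ℝ),
          Function.update y i t))
        (fderiv ℝ ut ((1 + α * δ ^ 2) * x₁ + δ * χ y, y)
          ((δ * fderiv ℝ χ y (Pi.single i 1), Pi.single i 1) : ℝ × (Fin m → ℝ))) (y i) := by
      have h := (hutd _).hasFDerivAt.comp_hasDerivAt (y i) h2
      simpa only [Function.update_eq_self, Function.comp_def] using h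
    exact (h1.add (h3.const_mul (δ ^ 2))).deriv
  -- second cross-sectional partials of v
  have hD : ∀ i : Fin m,
      pd i (pd i (fun y' => v (x₁, y'))) xt
        = deriv (deriv U) ((1 + α * δ ^ 2) * x₁ + δ * χ xt)
              * (δ * fderiv ℝ χ xt (Pi.single i 1)) * (δ * fderiv ℝ χ xt (Pi.single i 1))
          + deriv U ((1 + α * δ ^ 2) * x₁ + δ * χ xt)
              * (δ * fderiv ℝ (fderiv ℝ χ) xt (Pi.single i 1) (Pi.single i 1))
          + δ ^ 2 * (fderiv ℝ (fderiv ℝ ut) ((1 + α * δ ^ 2) * x₁ + δ * χ xt, xt)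
                ((δ * fderiv ℝ χ xt (Pi.single i 1), Pi.single i 1) : ℝ × (Fin m → ℝ))
                ((δ * fderiv ℝ χ xt (Pi.single i 1), Pi.single i 1) : ℝ × (Fin m → ℝ))
              + fderiv ℝ ut ((1 + α * δ ^ 2) * x₁ + δ * χ xt, xt)
                ((δ * fderiv ℝ (fderiv ℝ χ) xt (Pi.single i 1) (Pi.single i 1), 0)
                  : ℝ × (Fin m → ℝ))) := by
    intro i
    have hfun : pd i (fun y' => v (x₁, y')) = fun y =>
        deriv U ((1 + α * δ ^ 2) * x₁ + δ * χ y) * (δ * fderiv ℝ χ y (Pi.single i 1))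
          + δ ^ 2 * fderiv ℝ ut ((1 + α * δ ^ 2) * x₁ + δ * χ y, y)
              ((δ * fderiv ℝ χ y (Pi.single i 1), Pi.single i 1) : ℝ × (Fin m → ℝ)) :=
      funext (hC i)
    rw [hfun]
    have hup : HasDerivAt (Function.update xt i) (Pi.single i (1 : ℝ)) (xt i) :=
      hasDerivAt_update xt i (xt i)
    have hχc : HasDerivAt (fun t => χ (Function.update xt i t))
        (fderiv ℝ χ xt (Pi.single i 1)) (xt i) :=
      (hχd xt).hasFDerivAt.comp_hasDerivAt_of_eq (xt i) hup (Function.update_eq_self i xt).symm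
    have hsc : HasDerivAt (fun t => (1 + α * δ ^ 2) * x₁ + δ * χ (Function.update xt i t))
        (δ * fderiv ℝ χ xt (Pi.single i 1)) (xt i) :=
      (hχc.const_mul δ).const_add ((1 + α * δ ^ 2) * x₁)
    have p1 : HasDerivAt
        (fun t => deriv U ((1 + α * δ ^ 2) * x₁ + δ * χ (Function.update xt i t)))
        (deriv (deriv U) ((1 + α * δ ^ 2) * x₁ + δ * χ xt)
          * (δ * fderiv ℝ χ xt (Pi.single i 1))) (xt i) := by
      have h := (hU'd _).hasDerivAt.comp (xt i) hsc
      simpa only [Function.update_eq_self, Function.comp_def] using h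
    have q0 : HasDerivAt (fun t => fderiv ℝ χ (Function.update xt i t))
        (fderiv ℝ (fderiv ℝ χ) xt (Pi.single i 1)) (xt i) :=
      (hc1d xt).hasFDerivAt.comp_hasDerivAt_of_eq (xt i) hup (Function.update_eq_self i xt).symm
    have q1 : HasDerivAt (fun t => fderiv ℝ χ (Function.update xt i t) (Pi.single i 1))
        (fderiv ℝ (fderiv ℝ χ) xt (Pi.single i 1) (Pi.single i 1)) (xt i) := by
      have h := q0.clm_apply (hasDerivAt_const (xt i) (Pi.single i (1 : ℝ)))
      simpa only [Function.update_eq_self, map_zero, add_zero] using h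
    have q2 : HasDerivAt (fun t => δ * fderiv ℝ χ (Function.update xt i t) (Pi.single i 1))
        (δ * fderiv ℝ (fderiv ℝ χ) xt (Pi.single i 1) (Pi.single i 1)) (xt i) := q1.const_mul δ
    have T1 := p1.mul q2
    have hσ := hsc.prodMk hup
    have r0 := (hFd _).hasFDerivAt.comp_hasDerivAt (xt i) hσ
    have ru := q2.prodMk (hasDerivAt_const (xt i) (Pi.single i (1 : ℝ) : Fin m → ℝ))
    have T2 := r0.clm_apply ru
    have h5 := (T1.add (T2.const_mul (δ ^ 2))).deriv
    simp only [Function.comp_apply, Function.update_eq_self] at h5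
    refine h5.trans ?_
    ring
  -- axial derivative formulas for ut
  have haxut : ∀ z' : ℝ × (Fin m → ℝ), axD ut z' = fderiv ℝ ut z' (1, 0) :=
    fun z' => axD_eq_fderiv (hutd z')
  have hEcore : ∀ (s : ℝ) (y : Fin m → ℝ), deriv (fun t => axD ut (t, y)) s
      = fderiv ℝ (fderiv ℝ ut) (s, y) (1, 0) (1, 0) := by
    intro s y
    have hfun : (fun t => axD ut (t, y)) = fun t => fderiv ℝ ut (t, y) (1, 0) :=
      funext fun t => haxut (t, y)
    rw [hfun]
    have hcv : HasDerivAt (fun t : ℝ => ((t : ℝ), y)) (((1 : ℝ), (0 : Fin m → ℝ))) s :=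
      (hasDerivAt_id' s).prodMk (hasDerivAt_const s y)
    have h0 := (hFd _).hasFDerivAt.comp_hasDerivAt s hcv
    have h1 := h0.clm_apply (hasDerivAt_const s (((1 : ℝ), (0 : Fin m → ℝ))))
    refine h1.deriv.trans ?_
    rw [map_zero, add_zero]
  have hMi : ∀ i : Fin m,
      pd i (fun y => axD ut ((1 + α * δ ^ 2) * x₁ + δ * χ xt, y)) xt
        = fderiv ℝ (fderiv ℝ ut) ((1 + α * δ ^ 2) * x₁ + δ * χ xt, xt)
            (0, Pi.single i 1) (1, 0) := by
    intro i
    have hfun : (fun y => axD ut ((1 + α * δ ^ 2) * x₁ + δ * χ xt, y))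
        = fun y => fderiv ℝ ut ((1 + α * δ ^ 2) * x₁ + δ * χ xt, y) (1, 0) :=
      funext fun y => haxut _
    rw [hfun]
    have hup : HasDerivAt (Function.update xt i) (Pi.single i (1 : ℝ)) (xt i) :=
      hasDerivAt_update xt i (xt i)
    have hcv : HasDerivAt
        (fun t => (((1 + α * δ ^ 2) * x₁ + δ * χ xt : ℝ), Function.update xt i t))
        ((((0 : ℝ), Pi.single i (1 : ℝ))) : ℝ × (Fin m → ℝ)) (xt i) :=
      (hasDerivAt_const (xt i) _).prodMk hup
    have h0 := (hFd _).hasFDerivAt.comp_hasDerivAt (xt i) hcv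
    have h1 := (h0.clm_apply (hasDerivAt_const (xt i) (((1 : ℝ), (0 : Fin m → ℝ))))).deriv
    simp only [Function.update_eq_self, map_zero, add_zero] at h1
    exact h1
  have hpdut : ∀ (i : Fin m) (y : Fin m → ℝ),
      pd i (fun y' => ut ((1 + α * δ ^ 2) * x₁ + δ * χ xt, y')) y
        = fderiv ℝ ut ((1 + α * δ ^ 2) * x₁ + δ * χ xt, y) (0, Pi.single i 1) := by
    intro i y
    have hup : HasDerivAt (Function.update y i) (Pi.single i (1 : ℝ)) (y i) :=
      hasDerivAt_update y i (y i)
    have hcv : HasDerivAt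
        (fun t => (((1 + α * δ ^ 2) * x₁ + δ * χ xt : ℝ), Function.update y i t))
        ((((0 : ℝ), Pi.single i (1 : ℝ))) : ℝ × (Fin m → ℝ)) (y i) :=
      (hasDerivAt_const (y i) _).prodMk hup
    have h := ((hutd _).hasFDerivAt.comp_hasDerivAt (y i) hcv).deriv
    simp only [Function.update_eq_self] at h
    exact h
  have hSi : ∀ i : Fin m,
      pd i (pd i (fun y' => ut ((1 + α * δ ^ 2) * x₁ + δ * χ xt, y'))) xt
        = fderiv ℝ (fderiv ℝ ut) ((1 + α * δ ^ 2) * x₁ + δ * χ xt, xt)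
            (0, Pi.single i 1) (0, Pi.single i 1) := by
    intro i
    have hfun : pd i (fun y' => ut ((1 + α * δ ^ 2) * x₁ + δ * χ xt, y'))
        = fun y => fderiv ℝ ut ((1 + α * δ ^ 2) * x₁ + δ * χ xt, y) (0, Pi.single i 1) :=
      funext (hpdut i)
    rw [hfun]
    have hup : HasDerivAt (Function.update xt i) (Pi.single i (1 : ℝ)) (xt i) :=
      hasDerivAt_update xt i (xt i)
    have hcv : HasDerivAt
        (fun t => (((1 + α * δ ^ 2) * x₁ + δ * χ xt : ℝ), Function.update xt i t))
        ((((0 : ℝ), Pi.single i (1 : ℝ))) : ℝ × (Fin m → ℝ)) (xt i) :=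
      (hasDerivAt_const (xt i) _).prodMk hup
    have h0 := (hFd _).hasFDerivAt.comp_hasDerivAt (xt i) hcv
    have h1 := (h0.clm_apply
        (hasDerivAt_const (xt i) ((((0 : ℝ), Pi.single i (1 : ℝ))) : ℝ × (Fin m → ℝ)))).deriv
    simp only [Function.update_eq_self, map_zero, add_zero] at h1
    exact h1
  have hHi : ∀ i : Fin m, pd i (pd i χ) xt
      = fderiv ℝ (fderiv ℝ χ) xt (Pi.single i 1) (Pi.single i 1) := by
    intro i
    have hfun : pd i χ = fun y => fderiv ℝ χ y (Pi.single i 1) :=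
      funext fun y => pd_eq_fderiv (hχd y)
    rw [hfun]
    have hup : HasDerivAt (Function.update xt i) (Pi.single i (1 : ℝ)) (xt i) :=
      hasDerivAt_update xt i (xt i)
    have q0 := (hc1d _).hasFDerivAt.comp_hasDerivAt (xt i) hup
    have h := (q0.clm_apply (hasDerivAt_const (xt i) (Pi.single i (1 : ℝ)))).deriv
    simp only [Function.update_eq_self, map_zero, add_zero] at h
    exact h
  -- assembled component formulas
  have hgrad : gradSq χ xt = ∑ i : Fin m, fderiv ℝ χ xt (Pi.single i 1) ^ 2 :=
    Finset.sum_congr rfl fun i _ => by rw [pd_eq_fderiv (hχd xt)]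
  have hlapχ : lapT χ xt
      = ∑ i : Fin m, fderiv ℝ (fderiv ℝ χ) xt (Pi.single i 1) (Pi.single i 1) :=
    Finset.sum_congr rfl fun i _ => hHi i
  have hχ' : -(∑ i : Fin m, fderiv ℝ (fderiv ℝ χ) xt (Pi.single i 1) (Pi.single i 1)) = b xt := by
    rw [← hlapχ]; exact hχeq xt hxt
  have hlapfut : lapFull ut ((1 + α * δ ^ 2) * x₁ + δ * χ xt, xt)
      = fderiv ℝ (fderiv ℝ ut) ((1 + α * δ ^ 2) * x₁ + δ * χ xt, xt) (1, 0) (1, 0)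
        + ∑ i : Fin m, fderiv ℝ (fderiv ℝ ut) ((1 + α * δ ^ 2) * x₁ + δ * χ xt, xt)
            (0, Pi.single i 1) (0, Pi.single i 1) := by
    have h2 : lapT (fun y => ut ((1 + α * δ ^ 2) * x₁ + δ * χ xt, y)) xt
        = ∑ i : Fin m, fderiv ℝ (fderiv ℝ ut) ((1 + α * δ ^ 2) * x₁ + δ * χ xt, xt)
            (0, Pi.single i 1) (0, Pi.single i 1) :=
      Finset.sum_congr rfl fun i _ => hSi i
    have h1 := hEcore ((1 + α * δ ^ 2) * x₁ + δ * χ xt) xt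
    show deriv (fun t => axD ut (t, xt)) ((1 + α * δ ^ 2) * x₁ + δ * χ xt)
        + lapT (fun y => ut ((1 + α * δ ^ 2) * x₁ + δ * χ xt, y)) xt = _
    rw [h1, h2]
  have haxax : axD (axD ut) ((1 + α * δ ^ 2) * x₁ + δ * χ xt, xt)
      = fderiv ℝ (fderiv ℝ ut) ((1 + α * δ ^ 2) * x₁ + δ * χ xt, xt) (1, 0) (1, 0) := by
    show deriv (fun t => axD ut (t, xt)) ((1 + α * δ ^ 2) * x₁ + δ * χ xt) = _
    exact hEcore _ xt
  have hlapv : lapFull v (x₁, xt) = deriv (fun t => axD v (t, xt)) x₁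
      + ∑ i : Fin m, pd i (pd i (fun y => v (x₁, y))) xt := rfl
  -- the big cross-sectional sum
  have hsum1 : (∑ i : Fin m, pd i (pd i (fun y => v (x₁, y))) xt)
      = δ ^ 2 * deriv (deriv U) ((1 + α * δ ^ 2) * x₁ + δ * χ xt)
          * (∑ i : Fin m, fderiv ℝ χ xt (Pi.single i 1) ^ 2)
        + δ ^ 4 * fderiv ℝ (fderiv ℝ ut) ((1 + α * δ ^ 2) * x₁ + δ * χ xt, xt) (1, 0) (1, 0)
          * (∑ i : Fin m, fderiv ℝ χ xt (Pi.single i 1) ^ 2)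
        + δ * deriv U ((1 + α * δ ^ 2) * x₁ + δ * χ xt)
          * (∑ i : Fin m, fderiv ℝ (fderiv ℝ χ) xt (Pi.single i 1) (Pi.single i 1))
        + δ ^ 3 * fderiv ℝ ut ((1 + α * δ ^ 2) * x₁ + δ * χ xt, xt) (1, 0)
          * (∑ i : Fin m, fderiv ℝ (fderiv ℝ χ) xt (Pi.single i 1) (Pi.single i 1))
        + 2 * δ ^ 3 * (∑ i : Fin m,
            fderiv ℝ (fderiv ℝ ut) ((1 + α * δ ^ 2) * x₁ + δ * χ xt, xt)
              (0, Pi.single i 1) (1, 0) * fderiv ℝ χ xt (Pi.single i 1))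
        + δ ^ 2 * (∑ i : Fin m,
            fderiv ℝ (fderiv ℝ ut) ((1 + α * δ ^ 2) * x₁ + δ * χ xt, xt)
              (0, Pi.single i 1) (0, Pi.single i 1)) := by
    have hper : ∀ i : Fin m, pd i (pd i (fun y => v (x₁, y))) xt
        = δ ^ 2 * deriv (deriv U) ((1 + α * δ ^ 2) * x₁ + δ * χ xt)
            * (fderiv ℝ χ xt (Pi.single i 1) ^ 2)
          + δ ^ 4 * fderiv ℝ (fderiv ℝ ut) ((1 + α * δ ^ 2) * x₁ + δ * χ xt, xt) (1, 0) (1, 0)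
            * (fderiv ℝ χ xt (Pi.single i 1) ^ 2)
          + δ * deriv U ((1 + α * δ ^ 2) * x₁ + δ * χ xt)
            * (fderiv ℝ (fderiv ℝ χ) xt (Pi.single i 1) (Pi.single i 1))
          + δ ^ 3 * fderiv ℝ ut ((1 + α * δ ^ 2) * x₁ + δ * χ xt, xt) (1, 0)
            * (fderiv ℝ (fderiv ℝ χ) xt (Pi.single i 1) (Pi.single i 1))
          + 2 * δ ^ 3 * (fderiv ℝ (fderiv ℝ ut) ((1 + α * δ ^ 2) * x₁ + δ * χ xt, xt)
              (0, Pi.single i 1) (1, 0) * fderiv ℝ χ xt (Pi.single i 1))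
          + δ ^ 2 * (fderiv ℝ (fderiv ℝ ut) ((1 + α * δ ^ 2) * x₁ + δ * χ xt, xt)
              (0, Pi.single i 1) (0, Pi.single i 1)) := by
      intro i
      rw [hD i, bilin_expand,
        hsym ((1 + α * δ ^ 2) * x₁ + δ * χ xt, xt) (1, 0) ((0 : ℝ), Pi.single i 1),
        lin_expand0 (fderiv ℝ ut ((1 + α * δ ^ 2) * x₁ + δ * χ xt, xt))
          (δ * fderiv ℝ (fderiv ℝ χ) xt (Pi.single i 1) (Pi.single i 1))]
      ring
    rw [Finset.sum_congr rfl fun i _ => hper i]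
    rw [Finset.mul_sum, Finset.mul_sum, Finset.mul_sum, Finset.mul_sum, Finset.mul_sum,
      Finset.mul_sum]
    rw [← Finset.sum_add_distrib, ← Finset.sum_add_distrib, ← Finset.sum_add_distrib,
      ← Finset.sum_add_distrib, ← Finset.sum_add_distrib]
  -- the goal-side cross sum
  have hsum2 : (∑ i : Fin m,
        pd i (fun y => axD ut ((1 + α * δ ^ 2) * x₁ + δ * χ xt, y)) xt * pd i χ xt)
      = ∑ i : Fin m, fderiv ℝ (fderiv ℝ ut) ((1 + α * δ ^ 2) * x₁ + δ * χ xt, xt)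
          (0, Pi.single i 1) (1, 0) * fderiv ℝ χ xt (Pi.single i 1) :=
    Finset.sum_congr rfl fun i _ => by rw [hMi i, pd_eq_fderiv (hχd xt)]
  -- instantiate the equations
  have hut' := hutEq ((1 + α * δ ^ 2) * x₁ + δ * χ xt) xt hxt
  rw [hlapfut, haxut ((1 + α * δ ^ 2) * x₁ + δ * χ xt, xt), hgrad] at hut'
  have hode' := hode ((1 + α * δ ^ 2) * x₁ + δ * χ xt)
  -- rewrite the goal
  rw [hlapv, hB, hsum1, hA x₁ xt,
    lin_expand0 (fderiv ℝ ut ((1 + α * δ ^ 2) * x₁ + δ * χ xt, xt)) (1 + α * δ ^ 2),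
    hsum2, haxax, haxut ((1 + α * δ ^ 2) * x₁ + δ * χ xt, xt), hgrad]
  set P : ℝ := (1 + α * δ ^ 2) * x₁ + δ * χ xt with hP
  subst hα
  subst hγ
  linear_combination hode' + δ ^ 2 * hut'
    - (δ * deriv U P + δ ^ 3 * fderiv ℝ ut (P, xt) (1, 0)) * hχ'

end
end

section
/- (Maximum principle on the line.) Let r₀ > 0, c₀ ∈ ℝ, and let q : ℝ → ℝ satisfy q(ξ) ≤ 0 for all |ξ| ≥ r₀. Let w ∈ C²(ℝ) satisfy: w(ξ) → 0 as ξ → ±∞; w(ξ) > 0 for all |ξ| ≤ r₀; and w''(ξ) − c₀ w'(ξ) + q(ξ) w(ξ) < 0 for all |ξ| > r₀. Then w(ξ) > 0 for all ξ ∈ ℝ. -/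
open Filter Set Topology

private lemma no_local_min_of_neg_second_deriv (w : ℝ → ℝ) (hw : ContDiff ℝ 2 w) (a : ℝ)
    (h2 : deriv (deriv w) a < 0) : ¬ IsLocalMin w a := by
  intro hmin
  have h1 : deriv w a = 0 := hmin.deriv_eq_zero
  have hg' : Differentiable ℝ (deriv w) := by
    have := (contDiff_succ_iff_deriv (n := 1)).mp (by exact_mod_cast hw)
    exact this.2.2.differentiable one_ne_zero
  have hd : HasDerivAt (deriv w) (deriv (deriv w) a) a := (hg' a).hasDerivAt
  have hslope : Tendsto (slope (deriv w) a) (𝓝[≠] a) (𝓝 (deriv (deriv w) a)) :=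
    hasDerivAt_iff_tendsto_slope.mp hd
  have hev : ∀ᶠ x in 𝓝[>] a, slope (deriv w) a x < 0 :=
    (hslope.mono_left (nhdsWithin_mono a fun x hx => ne_of_gt hx)).eventually
      (eventually_lt_nhds h2)
  obtain ⟨b, hb, hIoo⟩ := (nhdsGT_basis a).eventually_iff.mp hev
  -- deriv w < 0 on Ioo a b
  have hneg : ∀ x ∈ Ioo a b, deriv w x < 0 := by
    intro x hx
    have hs := hIoo ⟨hx.1, hx.2⟩
    have hx0 : 0 < x - a := sub_pos.mpr hx.1
    have hs' : (x - a)⁻¹ * deriv w x < 0 := by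
      have : slope (deriv w) a x = (x - a)⁻¹ * deriv w x := by simp [slope, h1]
      linarith [this ▸ hs]
    by_contra hc
    push_neg at hc
    exact absurd (mul_nonneg (inv_pos.mpr hx0).le hc) (not_le.mpr hs')
  -- w is strictly decreasing on [a, b], contradicting the local min
  have hanti : StrictAntiOn w (Icc a b) :=
    strictAntiOn_of_deriv_neg (convex_Icc a b) hw.continuous.continuousOn
      (by rw [interior_Icc]; exact hneg)
  have hev2 : ∀ᶠ x in 𝓝[>] a, w a ≤ w x :=
    nhdsWithin_le_nhds hmin
  have hev3 : ∀ᶠ x in 𝓝[>] a, x ∈ Ioo a b := Ioo_mem_nhdsGT_of_mem ⟨le_refl a, hb⟩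
  obtain ⟨x, hx1, hx2⟩ := (hev2.and hev3).exists
  exact absurd (hanti ⟨le_refl a, hb.le⟩ ⟨hx2.1.le, hx2.2.le⟩ hx2.1) (not_lt.mpr hx1)

/-- **Maximum principle on the line.**
Let `q(ξ) ≤ 0` for `|ξ| ≥ r₀`, and let `w ∈ C²(ℝ)` tend to `0` at `±∞`, be positive
on `|ξ| ≤ r₀`, and satisfy `w'' − c₀w' + qw < 0` for `|ξ| > r₀`. Then `w > 0` on `ℝ`. -/
theorem maximum_principle_on_line (r₀ c₀ : ℝ) (hr₀ : 0 < r₀) (q w : ℝ → ℝ)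
    (hq : ∀ ξ : ℝ, r₀ ≤ |ξ| → q ξ ≤ 0)
    (hw : ContDiff ℝ 2 w)
    (hlim_top : Tendsto w atTop (nhds 0))
    (hlim_bot : Tendsto w atBot (nhds 0))
    (hpos : ∀ ξ : ℝ, |ξ| ≤ r₀ → 0 < w ξ)
    (hsub : ∀ ξ : ℝ, r₀ < |ξ| → deriv (deriv w) ξ - c₀ * deriv w ξ + q ξ * w ξ < 0) :
    ∀ ξ : ℝ, 0 < w ξ := by
  by_contra hcon
  push_neg at hcon
  obtain ⟨ξ₀, hξ₀⟩ := hcon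
  -- find a local minimum point ξ* with w ξ* ≤ 0, |ξ*| > r₀
  have key : ∃ ξ' : ℝ, r₀ < |ξ'| ∧ w ξ' ≤ 0 ∧ IsLocalMin w ξ' := by
    by_cases hall : ∀ ζ : ℝ, 0 ≤ w ζ
    · -- w ≥ 0 everywhere and w ξ₀ ≤ 0, so ξ₀ is a global (hence local) min
      have h0 : w ξ₀ = 0 := le_antisymm hξ₀ (hall ξ₀)
      refine ⟨ξ₀, ?_, hξ₀, Filter.Eventually.of_forall fun x => h0 ▸ hall x⟩
      by_contra hc
      push_neg at hc
      exact absurd (hpos ξ₀ hc) (by rw [h0]; exact lt_irrefl 0)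
    · push_neg at hall
      obtain ⟨ζ, hζ⟩ := hall
      set ε : ℝ := -w ζ / 2 with hε
      have hε0 : 0 < ε := by simp [hε]; linarith
      have htop : ∀ᶠ ξ in atTop, -ε < w ξ :=
        hlim_top.eventually (eventually_gt_nhds (by linarith))
      have hbot : ∀ᶠ ξ in atBot, -ε < w ξ :=
        hlim_bot.eventually (eventually_gt_nhds (by linarith))
      obtain ⟨M₁, hM₁⟩ := eventually_atTop.mp htop
      obtain ⟨M₂, hM₂⟩ := eventually_atBot.mp hbot
      set a : ℝ := min M₂ ζ - 1 with ha
      set b : ℝ := max M₁ ζ + 1 with hb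
      have haζ : a < ζ := by simp [ha]; nlinarith [min_le_right M₂ ζ]
      have hζb : ζ < b := by simp [hb]; nlinarith [le_max_right M₁ ζ]
      obtain ⟨ξ', hmem, hminOn⟩ := (isCompact_Icc (a := a) (b := b)).exists_isMinOn
        (Set.nonempty_Icc.mpr (by linarith)) hw.continuous.continuousOn
      have hwξ' : w ξ' ≤ w ζ := hminOn ⟨haζ.le, hζb.le⟩
      have hwa : -ε < w a := hM₂ a (by rw [ha]; nlinarith [min_le_left M₂ ζ])
      have hwb : -ε < w b := hM₁ b (by rw [hb]; nlinarith [le_max_left M₁ ζ])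
      have hζε : w ζ = -ε - ε := by rw [hε]; ring
      have hane : a < ξ' := lt_of_le_of_ne hmem.1 (by
        intro h; rw [h] at hwa; nlinarith)
      have hbne : ξ' < b := lt_of_le_of_ne hmem.2 (by
        intro h; rw [h] at hwξ'; nlinarith)
      have hloc : IsLocalMin w ξ' := hminOn.isLocalMin (Icc_mem_nhds hane hbne)
      have hwneg : w ξ' < 0 := by nlinarith
      refine ⟨ξ', ?_, hwneg.le, hloc⟩
      by_contra hc
      push_neg at hc
      exact absurd (hpos ξ' hc) (not_lt.mpr hwneg.le)
  obtain ⟨ξ', hr, hw0, hmin⟩ := key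
  have hd1 : deriv w ξ' = 0 := hmin.deriv_eq_zero
  have hqw : 0 ≤ q ξ' * w ξ' := by nlinarith [hq ξ' hr.le, hw0, mul_nonneg (neg_nonneg.mpr (hq ξ' hr.le)) (neg_nonneg.mpr hw0)]
  have h2 : deriv (deriv w) ξ' < 0 := by
    have := hsub ξ' hr
    rw [hd1, mul_zero] at this
    linarith
  exact no_local_min_of_neg_second_deriv w hw ξ' h2 hmin
end

section
/- (No-resonance bound on modal correctors.) Let f ∈ C¹, c₀ ∈ ℝ, and let U ∈ C²(ℝ) satisfy U'' − c₀U' + f(U) = 0, U' > 0 on ℝ, U'(ξ) → 0 as ξ → ±∞, |U''(ξ)| ≤ M U'(ξ) for all ξ and some M > 0, and f'(U(ξ)) ≤ 0 for all |ξ| ≥ r₀, for some r₀ > 0. Let λ* > 0 and C₁ > 0. Then there exists a constant C₃ > 0, depending only on c₀, r₀, M, λ*, C₁, min_{|ξ| ≤ r₀} U'(ξ), and sup U', such that: for every λ ≥ λ*, every a ∈ ℝ, and every u ∈ C²(ℝ) with u(ξ) → 0 as ξ → ±∞, ‖u‖_{C²(ℝ)} ≤ C₁|a|, and u''(ξ)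 − λ u(ξ) − c₀ u'(ξ) + f'(U(ξ)) u(ξ) = −a U''(ξ) for all ξ, one has |u(ξ)| ≤ C₃ |a| U'(ξ) for all ξ ∈ ℝ. -/
open Filter

section Aux
open Set

lemma second_deriv_nonneg_of_isLocalMin {g : ℝ → ℝ} {x : ℝ}
    (hg : Differentiable ℝ g) (hg2 : DifferentiableAt ℝ (deriv g) x)
    (hmin : IsLocalMin g x) : 0 ≤ deriv (deriv g) x := by
  by_contra h
  push_neg at h
  have h1 : deriv g x = 0 := hmin.deriv_eq_zero
  have h2 : HasDerivAt (deriv g) (deriv (deriv g) x) x := hg2.hasDerivAt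
  have h3 : Tendsto (slope (deriv g) x) (nhdsWithin x {x}ᶜ) (nhds (deriv (deriv g) x)) :=
    hasDerivAt_iff_tendsto_slope.mp h2
  have h4 : Tendsto (slope (deriv g) x) (nhdsWithin x (Iio x)) (nhds (deriv (deriv g) x)) :=
    h3.mono_left (nhdsWithin_mono x (fun y hy => ne_of_lt hy))
  have h5 : ∀ᶠ y in nhdsWithin x (Iio x), slope (deriv g) x y < 0 :=
    h4.eventually (Iio_mem_nhds h)
  have h6 : ∀ᶠ y in nhdsWithin x (Iio x), g x ≤ g y :=
    hmin.filter_mono nhdsWithin_le_nhds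
  have h7 : ∀ᶠ y in nhdsWithin x (Iio x),
      slope (deriv g) x y < 0 ∧ g x ≤ g y := h5.and h6
  obtain ⟨l, hl, hsub⟩ := mem_nhdsLT_iff_exists_Ioo_subset.mp h7
  have hl' : l < x := hl
  -- on Ioo l x, deriv g y > 0
  have hpos : ∀ y ∈ Ioo l x, 0 < deriv g y := by
    intro y hy
    have := (hsub hy).1
    rw [slope_def_field] at this
    have hyx : y - x < 0 := by simp [sub_neg]; exact hy.2
    rw [div_neg_iff] at this
    rcases this with ⟨h', _⟩ | ⟨h', _⟩
    · linarith [hy.2, h']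
    · rw [h1] at h'; linarith [h']
  -- g is strictly monotone on [l', x] where l' = (l+x)/2
  have hlx : l < (l + x) / 2 := by linarith [hl']
  have hlx2 : (l + x) / 2 < x := by linarith [hl']
  have hmono : StrictMonoOn g (Icc ((l + x) / 2) x) := by
    apply strictMonoOn_of_deriv_pos (convex_Icc _ _) hg.continuous.continuousOn
    intro y hy
    rw [interior_Icc] at hy
    exact hpos y ⟨lt_trans hlx hy.1, hy.2⟩
  have h8 : g ((l + x) / 2) < g x :=
    hmono (left_mem_Icc.mpr hlx2.le) (right_mem_Icc.mpr hlx2.le) hlx2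
  have h9 : g x ≤ g ((l + x) / 2) := (hsub ⟨hlx, hlx2⟩).2
  linarith

lemma nonneg_on_Ici_of_minprinciple (v : ℝ → ℝ) (b : ℝ)
    (hd : Differentiable ℝ v) (hd2 : Differentiable ℝ (deriv v))
    (hb : 0 ≤ v b) (htop : Tendsto v atTop (nhds 0))
    (hkey : ∀ x, b < x → v x < 0 → deriv v x = 0 → deriv (deriv v) x < 0) :
    ∀ x, b ≤ x → 0 ≤ v x := by
  by_contra h
  push_neg at h
  obtain ⟨ξ, hbξ, hξ⟩ := h
  have hev : ∀ᶠ x in atTop, v ξ < v x := htop.eventually_const_lt hξ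
  obtain ⟨T, hT1, hT2⟩ := ((eventually_ge_atTop ξ).and hev).exists
  have hbT : b ≤ T := le_trans hbξ hT1
  obtain ⟨x₀, hx₀, hmin⟩ := isCompact_Icc.exists_isMinOn (Set.nonempty_Icc.mpr hbT)
    hd.continuous.continuousOn
  have hξmem : ξ ∈ Set.Icc b T := ⟨hbξ, hT1⟩
  have hvx₀ : v x₀ ≤ v ξ := hmin hξmem
  have hx₀neg : v x₀ < 0 := lt_of_le_of_lt hvx₀ hξ
  have hbx₀ : b < x₀ := lt_of_le_of_ne hx₀.1 (by rintro rfl; linarith)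
  have hx₀T : x₀ < T := lt_of_le_of_ne hx₀.2 (by rintro rfl; linarith [hmin hξmem])
  have hloc : IsLocalMin v x₀ := hmin.isLocalMin (Icc_mem_nhds hbx₀ hx₀T)
  have h1 : deriv v x₀ = 0 := hloc.deriv_eq_zero
  have h2 : 0 ≤ deriv (deriv v) x₀ :=
    second_deriv_nonneg_of_isLocalMin hd (hd2 x₀) hloc
  linarith [hkey x₀ hbx₀ hx₀neg h1]

end Aux

/-- **No-resonance bound on the modal correctors.**
Under the stated hypotheses on the front `U`, there is a constant `C₃` (depending only
on the data listed, not on `λ ≥ λ*`, `a`, or `u`) such that any solution `u` of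
`u'' − λu − c₀u' + f'(U)u = −aU''` vanishing at `±∞` with `‖u‖_{C²} ≤ C₁|a|`
satisfies `|u(ξ)| ≤ C₃|a| U'(ξ)` for all `ξ`. -/
theorem no_resonance_modal_bound (f U : ℝ → ℝ) (c₀ r₀ M lamStar C₁ : ℝ)
    (hf : ContDiff ℝ 1 f) (hU : ContDiff ℝ 2 U)
    (hode : ∀ ξ : ℝ, deriv (deriv U) ξ - c₀ * deriv U ξ + f (U ξ) = 0)
    (hU'pos : ∀ ξ : ℝ, 0 < deriv U ξ)
    (hU'top : Tendsto (deriv U) atTop (nhds 0))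
    (hU'bot : Tendsto (deriv U) atBot (nhds 0))
    (hM : 0 < M)
    (hU'' : ∀ ξ : ℝ, |deriv (deriv U) ξ| ≤ M * deriv U ξ)
    (hr₀ : 0 < r₀)
    (hfU : ∀ ξ : ℝ, r₀ ≤ |ξ| → deriv f (U ξ) ≤ 0)
    (hlamStar : 0 < lamStar) (hC₁ : 0 < C₁) :
    ∃ C₃ : ℝ, 0 < C₃ ∧
      ∀ lam : ℝ, lamStar ≤ lam → ∀ a : ℝ, ∀ u : ℝ → ℝ,
        ContDiff ℝ 2 u →
        Tendsto u atTop (nhds 0) → Tendsto u atBot (nhds 0) →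
        (∀ ξ : ℝ, |u ξ| + |deriv u ξ| + |deriv (deriv u) ξ| ≤ C₁ * |a|) →
        (∀ ξ : ℝ, deriv (deriv u) ξ - lam * u ξ - c₀ * deriv u ξ
            + deriv f (U ξ) * u ξ = -a * deriv (deriv U) ξ) →
        ∀ ξ : ℝ, |u ξ| ≤ C₃ * |a| * deriv U ξ := by
  -- regularity facts for U and f
  have hUd : Differentiable ℝ U := hU.differentiable (by norm_num)
  have hU2 : ContDiff ℝ ((1 : ℕ) + 1) U := by exact_mod_cast hU
  have hU'c : ContDiff ℝ 1 (deriv U) := (contDiff_succ_iff_deriv.mp hU2).2.2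
  have hU'd : Differentiable ℝ (deriv U) := hU'c.differentiable one_ne_zero
  have hfd : Differentiable ℝ f := hf.differentiable one_ne_zero
  have hU''eq : deriv (deriv U) = fun ξ => c₀ * deriv U ξ - f (U ξ) :=
    funext fun ξ => by linarith [hode ξ]
  have hU''d : Differentiable ℝ (deriv (deriv U)) := by
    rw [hU''eq]; exact (hU'd.const_mul c₀).sub (hfd.comp hUd)
  have hU''' : ∀ ξ : ℝ, deriv (deriv (deriv U)) ξ
      = c₀ * deriv (deriv U) ξ - deriv f (U ξ) * deriv U ξ := by
    intro ξ
    conv_lhs => rw [hU''eq]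
    have h1 : HasDerivAt (fun ξ => c₀ * deriv U ξ - f (U ξ))
        (c₀ * deriv (deriv U) ξ - deriv f (U ξ) * deriv U ξ) ξ := by
      have hcomp : HasDerivAt (fun ξ => f (U ξ)) (deriv f (U ξ) * deriv U ξ) ξ := by
        exact (hfd (U ξ)).hasDerivAt.comp ξ (hUd ξ).hasDerivAt
      exact ((hU'd ξ).hasDerivAt.const_mul c₀).sub hcomp
    exact h1.deriv
  -- minimum of U' on the compact core
  obtain ⟨ξm, hξm, hmmin⟩ := isCompact_Icc.exists_isMinOn
    (Set.nonempty_Icc.mpr (by linarith : -r₀ ≤ r₀)) hU'd.continuous.continuousOn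
  set m : ℝ := deriv U ξm with hm_def
  have hmpos : 0 < m := hU'pos ξm
  set K : ℝ := max (M / lamStar) (C₁ / m) with hK_def
  have hK0 : 0 < K := lt_max_of_lt_left (div_pos hM hlamStar)
  have hKM : M ≤ K * lamStar := by
    have := le_max_left (M / lamStar) (C₁ / m)
    rw [div_le_iff₀ hlamStar] at this; linarith
  have hKC : C₁ ≤ K * m := by
    have := le_max_right (M / lamStar) (C₁ / m)
    rw [div_le_iff₀ hmpos] at this; linarith
  refine ⟨K, hK0, ?_⟩
  intro lam hlam a u hu hutop hubot hubnd hueq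
  set A : ℝ := |a| with hA_def
  have hA0 : 0 ≤ A := abs_nonneg a
  have hud : Differentiable ℝ u := hu.differentiable (by norm_num)
  have hu2 : ContDiff ℝ ((1 : ℕ) + 1) u := by exact_mod_cast hu
  have hu'd : Differentiable ℝ (deriv u) :=
    (contDiff_succ_iff_deriv.mp hu2).2.2.differentiable one_ne_zero
  -- the barrier argument, for both signs
  have main : ∀ s : ℝ, s = 1 ∨ s = -1 →
      ∀ x : ℝ, 0 ≤ K * A * deriv U x + s * u x := by
    intro s hs
    set w : ℝ → ℝ := fun x => K * A * deriv U x + s * u x with hw_def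
    have hwd : Differentiable ℝ w := (hU'd.const_mul _).add (hud.const_mul s)
    have hw' : deriv w = fun x => K * A * deriv (deriv U) x + s * deriv u x :=
      funext fun x =>
        (((hU'd x).hasDerivAt.const_mul (K * A)).add ((hud x).hasDerivAt.const_mul s)).deriv
    have hw'd : Differentiable ℝ (deriv w) := by
      rw [hw']; exact (hU''d.const_mul _).add (hu'd.const_mul s)
    have hw'' : ∀ x : ℝ, deriv (deriv w) x
        = K * A * deriv (deriv (deriv U)) x + s * deriv (deriv u) x := by
      intro x; rw [hw']
      exact (((hU''d x).hasDerivAt.const_mul (K * A)).add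
        ((hu'd x).hasDerivAt.const_mul s)).deriv
    -- interior (compact) bound
    have hIcc : ∀ x ∈ Set.Icc (-r₀) r₀, 0 ≤ w x := by
      intro x hx
      have h1 : |u x| ≤ C₁ * A := by
        have h2 := hubnd x
        have h3 := abs_nonneg (deriv u x)
        have h4 := abs_nonneg (deriv (deriv u) x)
        linarith
      have hsu : -(C₁ * A) ≤ s * u x := by
        rcases hs with rfl | rfl
        · have := neg_abs_le (u x); linarith
        · have := le_abs_self (u x); linarith
      have hmle : m ≤ deriv U x := hmmin hx
      have h5 : C₁ * A ≤ K * A * deriv U x := by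
        have h6 : K * m ≤ K * deriv U x := mul_le_mul_of_nonneg_left hmle hK0.le
        nlinarith [mul_le_mul_of_nonneg_right (hKC.trans h6) hA0]
      simp only [hw_def]
      linarith
    -- the key differential inequality at a negative local minimum
    have hkey : ∀ x : ℝ, r₀ ≤ |x| → w x < 0 → deriv w x = 0 →
        deriv (deriv w) x < 0 := by
      intro x hx hneg hzero
      have hfUx : deriv f (U x) ≤ 0 := hfU x hx
      have hu2x : deriv (deriv u) x = lam * u x + c₀ * deriv u x
          - deriv f (U x) * u x - a * deriv (deriv U) x := by linarith [hueq x]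
      have hz : K * A * deriv (deriv U) x + s * deriv u x = 0 := by
        rw [hw'] at hzero; exact hzero
      have hcz : c₀ * (K * A * deriv (deriv U) x + s * deriv u x) = 0 := by
        rw [hz, mul_zero]
      have hwneg : K * A * deriv U x + s * u x < 0 := hneg
      have hA1 : (lam - deriv f (U x)) * (K * A * deriv U x + s * u x) < 0 :=
        mul_neg_of_pos_of_neg (by linarith) hwneg
      have hlamK : M ≤ lam * K :=
        hKM.trans (by nlinarith)
      have hB : 0 ≤ A * deriv U x * (lam * K - M) :=
        mul_nonneg (mul_nonneg hA0 (hU'pos x).le) (by linarith)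
      have hsa : |s * a| = A := by
        rcases hs with rfl | rfl <;> simp [hA_def, abs_mul]
      have hsaU : -(s * a * deriv (deriv U) x) ≤ A * (M * deriv U x) := by
        calc -(s * a * deriv (deriv U) x) ≤ |s * a * deriv (deriv U) x| := neg_le_abs _
          _ = |s * a| * |deriv (deriv U) x| := abs_mul _ _
          _ ≤ A * (M * deriv U x) := by
              rw [hsa]; exact mul_le_mul_of_nonneg_left (hU'' x) hA0
      rw [hw'' x, hU''' x, hu2x]
      have key : K * A * (c₀ * deriv (deriv U) x - deriv f (U x) * deriv U x)
          + s * (lam * u x + c₀ * deriv u x - deriv f (U x) * u x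
              - a * deriv (deriv U) x)
          = c₀ * (K * A * deriv (deriv U) x + s * deriv u x)
            + (lam - deriv f (U x)) * (K * A * deriv U x + s * u x)
            - lam * (K * A * deriv U x) - s * a * deriv (deriv U) x := by ring
      rw [key]
      nlinarith [hcz, hA1, hB, hsaU]
    -- tendsto at both ends
    have hwtop : Tendsto w atTop (nhds 0) := by
      have := (hU'top.const_mul (K * A)).add (hutop.const_mul s)
      simpa using this
    have hwbot : Tendsto w atBot (nhds 0) := by
      have := (hU'bot.const_mul (K * A)).add (hubot.const_mul s)
      simpa using this
    -- right half-line
    have hright : ∀ x : ℝ, r₀ ≤ x → 0 ≤ w x := by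
      apply nonneg_on_Ici_of_minprinciple w r₀ hwd hw'd
        (hIcc r₀ ⟨by linarith, le_rfl⟩) hwtop
      intro x hx hneg hzero
      exact hkey x (le_trans hx.le (le_abs_self x)) hneg hzero
    -- left half-line via reflection
    have hWd : Differentiable ℝ (fun x => w (-x)) := hwd.comp differentiable_neg
    have hW' : deriv (fun x => w (-x)) = fun x => -deriv w (-x) :=
      funext fun x => deriv_comp_neg w x
    have hW'd : Differentiable ℝ (deriv fun x => w (-x)) := by
      rw [hW']; exact ((hw'd.comp differentiable_neg).neg)
    have hW'' : ∀ x : ℝ, deriv (deriv fun x => w (-x)) x = deriv (deriv w) (-x) := by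
      intro x
      rw [hW']
      calc deriv (fun y => -deriv w (-y)) x
          = -deriv (fun y => deriv w (-y)) x := deriv.neg
        _ = -(-deriv (deriv w) (-x)) := by rw [deriv_comp_neg]
        _ = deriv (deriv w) (-x) := neg_neg _
    have hleft : ∀ x : ℝ, r₀ ≤ x → 0 ≤ w (-x) := by
      apply nonneg_on_Ici_of_minprinciple (fun x => w (-x)) r₀ hWd hW'd
        (hIcc (-r₀) ⟨le_rfl, by linarith⟩) (hwbot.comp tendsto_neg_atTop_atBot)
      intro x hx hneg hzero
      rw [hW'' x]
      apply hkey (-x)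
      · rw [abs_neg]; exact le_trans hx.le (le_abs_self x)
      · exact hneg
      · rw [hW'] at hzero; simpa using hzero
    -- combine
    intro x
    rcases le_or_gt r₀ x with h | h
    · exact hright x h
    rcases le_or_gt x (-r₀) with h' | h'
    · have := hleft (-x) (by linarith)
      simpa using this
    · exact hIcc x ⟨h'.le, h.le⟩
  -- conclude
  intro ξ
  have h1 := main 1 (Or.inl rfl) ξ
  have h2 := main (-1) (Or.inr rfl) ξ
  rw [abs_le]
  constructor <;> [linarith; linarith]
end

section
/- (Hölder modulus under a logarithmic weight.) Let 0 < s < 1, K > 0, and let p : [0, 1] → [0, ∞) be continuous and nondecreasing with p(0) = 0 and p(u) ≤ K u^s for all u ∈ [0, 1]. Then for every s' ∈ (0, s) there exists a constant C = C(K, s, s') such that for all h ∈ (0, 1/2]: ∫₀^h (−log u)^{1/2} dp(u) ≤ C h^{s'}, where the integral is the Lebesgue–Stieltjes integral with respect to the nondecreasing function p. -/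
open MeasureTheory

/-- A continuous nondecreasing function determines a Stieltjes function. -/
noncomputable def continuousStieltjes (p : ℝ → ℝ) (hmono : Monotone p)
    (hcont : Continuous p) : StieltjesFunction ℝ :=
  ⟨p, hmono, fun x => (hcont.continuousAt).continuousWithinAt⟩

lemma sqrt_neg_log_le {u ε : ℝ} (hu : 0 < u) (hε : 0 < ε) :
    Real.sqrt (-Real.log u) ≤ (Real.sqrt (2 * ε))⁻¹ * u ^ (-ε) := by
  have h2 : Real.log u⁻¹ ≤ (u⁻¹) ^ (2 * ε) / (2 * ε) :=
    Real.log_le_rpow_div (inv_nonneg.2 hu.le) (by positivity)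
  have h3 : (u⁻¹ : ℝ) ^ (2 * ε) = (u ^ (-ε)) ^ (2:ℕ) := by
    rw [← Real.rpow_natCast (u ^ (-ε)) 2, ← Real.rpow_mul hu.le, Real.inv_rpow hu.le,
      ← Real.rpow_neg hu.le]
    ring_nf
  calc Real.sqrt (-Real.log u)
      ≤ Real.sqrt ((u ^ (-ε)) ^ (2:ℕ) / (2 * ε)) := by
        apply Real.sqrt_le_sqrt
        rw [← h3, ← Real.log_inv]
        exact h2
    _ = Real.sqrt ((u ^ (-ε)) ^ (2:ℕ)) / Real.sqrt (2 * ε) := Real.sqrt_div (by positivity) _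
    _ = (Real.sqrt (2 * ε))⁻¹ * u ^ (-ε) := by
        rw [show ((u ^ (-ε)) ^ (2:ℕ) : ℝ) = (u ^ (-ε)) ^ (2:ℕ) from rfl]
        rw [pow_two, Real.sqrt_mul_self (Real.rpow_nonneg hu.le _), div_eq_mul_inv, mul_comm]

lemma pow_rpow_comm {x : ℝ} (hx : 0 ≤ x) (a : ℝ) (k : ℕ) :
    ((x ^ k : ℝ)) ^ a = (x ^ a) ^ k := by
  rw [← Real.rpow_natCast x k, ← Real.rpow_mul hx, mul_comm, Real.rpow_mul hx,
    Real.rpow_natCast]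

/-- **Hölder modulus under a logarithmic weight.**
If `p` is continuous, nondecreasing, with `p(0) = 0` and `p(u) ≤ K uˢ` on `[0,1]`,
then for every `s' ∈ (0, s)` there is `C = C(K,s,s')` with
`∫₀ʰ (−log u)^{1/2} dp(u) ≤ C h^{s'}` for all `h ∈ (0, 1/2]`, the integral being the
Lebesgue–Stieltjes integral with respect to `p`. -/
theorem holder_modulus_log_weight (s K : ℝ) (hs : 0 < s) (hs1 : s < 1) (hK : 0 < K)
    (p : ℝ → ℝ) (hmono : Monotone p) (hcont : Continuous p)
    (hp0 : p 0 = 0) (hpK : ∀ u ∈ Set.Icc (0:ℝ) 1, p u ≤ K * u ^ s) :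
    ∀ s' : ℝ, 0 < s' → s' < s →
      ∃ C : ℝ, 0 < C ∧ ∀ h : ℝ, 0 < h → h ≤ 1 / 2 →
        ∫ u in Set.Ioc (0:ℝ) h, Real.sqrt (-Real.log u)
            ∂(continuousStieltjes p hmono hcont).measure
          ≤ C * h ^ s' := by
  intro s' hs'0 hs's
  classical
  set μ := (continuousStieltjes p hmono hcont).measure with hμdef
  set ε := (s - s') / 2 with hεdef
  have hε0 : 0 < ε := by rw [hεdef]; linarith
  have hs'le : s' ≤ s - ε := by rw [hεdef]; linarith
  have hsε0 : 0 < s - ε := lt_of_lt_of_le hs'0 hs'le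
  set w : ℝ := (2:ℝ)⁻¹ with hwdef
  have hw0 : (0:ℝ) < w := by norm_num [hwdef]
  have hw1 : w < 1 := by norm_num [hwdef]
  set c : ℝ := (Real.sqrt (2 * ε))⁻¹ with hcdef
  have hc0 : 0 < c := by
    rw [hcdef]
    exact inv_pos.2 (Real.sqrt_pos.2 (by linarith))
  set r : ℝ := w ^ (s - ε) with hrdef
  have hr0 : 0 ≤ r := Real.rpow_nonneg hw0.le _
  have hr1 : r < 1 := Real.rpow_lt_one hw0.le hw1 hsε0
  set C : ℝ := c * K * w ^ (-ε) * (1 - r)⁻¹ with hCdef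
  have hC : 0 < C := by
    have h1 : (0:ℝ) < w ^ (-ε) := Real.rpow_pos_of_pos hw0 _
    have h2 : (0:ℝ) < 1 - r := by linarith
    rw [hCdef]; positivity
  refine ⟨C, hC, ?_⟩
  intro h hh hh2
  have hh1 : h ≤ 1 := by linarith
  set t : ℕ → ℝ := fun k => h * w ^ k with htdef
  have ht_pos : ∀ k, 0 < t k := fun k => by positivity
  have ht_le : ∀ k, t k ≤ 1 := by
    intro k
    have : w ^ k ≤ 1 := pow_le_one₀ hw0.le hw1.le
    calc t k = h * w ^ k := rfl
      _ ≤ 1 * 1 := mul_le_mul hh1 this (by positivity) zero_le_one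
      _ = 1 := by norm_num
  -- reduce to lintegral
  have hnn : 0 ≤ᵐ[μ.restrict (Set.Ioc 0 h)] fun u => Real.sqrt (-Real.log u) :=
    Filter.Eventually.of_forall fun u => Real.sqrt_nonneg _
  have hmeas : AEStronglyMeasurable (fun u => Real.sqrt (-Real.log u))
      (μ.restrict (Set.Ioc 0 h)) :=
    (Real.continuous_sqrt.measurable.comp Real.measurable_log.neg).aestronglyMeasurable
  rw [integral_eq_lintegral_of_nonneg_ae hnn hmeas]
  set D : ℝ := c * K * w ^ (-ε) * h ^ (s - ε) with hDdef
  have hD0 : 0 ≤ D := by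
    have h1 : (0:ℝ) < w ^ (-ε) := Real.rpow_pos_of_pos hw0 _
    have h2 : (0:ℝ) < h ^ (s - ε) := Real.rpow_pos_of_pos hh _
    rw [hDdef]; positivity
  have key : ∫⁻ u in Set.Ioc (0:ℝ) h, ENNReal.ofReal (Real.sqrt (-Real.log u)) ∂μ
      ≤ ENNReal.ofReal (C * h ^ s') := by
    have hcover : Set.Ioc (0:ℝ) h ⊆ ⋃ k : ℕ, Set.Ioc (t (k+1)) (t k) := by
      intro u hu
      obtain ⟨hu0, huh⟩ := hu
      have hex : ∃ k, t k < u := by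
        obtain ⟨n, hn⟩ := exists_pow_lt_of_lt_one (div_pos hu0 hh) hw1
        refine ⟨n, ?_⟩
        have := (mul_lt_mul_iff_right₀ hh).2 hn
        rwa [mul_div_cancel₀ _ hh.ne'] at this
      have hkpos : 0 < Nat.find hex := by
        rw [Nat.find_pos]
        simp only [htdef, pow_zero, mul_one]
        exact not_lt.2 huh
      refine Set.mem_iUnion.2 ⟨Nat.find hex - 1, ?_, ?_⟩
      · rw [show Nat.find hex - 1 + 1 = Nat.find hex by omega]
        exact Nat.find_spec hex
      · exact not_lt.1 (Nat.find_min hex (by omega))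
    have term_bound : ∀ k : ℕ,
        ∫⁻ u in Set.Ioc (t (k+1)) (t k), ENNReal.ofReal (Real.sqrt (-Real.log u)) ∂μ
          ≤ ENNReal.ofReal (D * r ^ k) := by
      intro k
      have hb : ∀ u ∈ Set.Ioc (t (k+1)) (t k),
          Real.sqrt (-Real.log u) ≤ c * (t (k+1)) ^ (-ε) := by
        intro u hu
        have hu0 : 0 < u := (ht_pos (k+1)).trans hu.1
        calc Real.sqrt (-Real.log u) ≤ c * u ^ (-ε) := sqrt_neg_log_le hu0 hε0
          _ ≤ c * (t (k+1)) ^ (-ε) := by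
              apply mul_le_mul_of_nonneg_left _ hc0.le
              exact Real.rpow_le_rpow_of_nonpos (ht_pos (k+1)) hu.1.le (by linarith)
      have hmeasc : μ (Set.Ioc (t (k+1)) (t k)) ≤ ENNReal.ofReal (K * (t k) ^ s) := by
        rw [hμdef, StieltjesFunction.measure_Ioc]
        apply ENNReal.ofReal_le_ofReal
        have h1 : p (t (k+1)) ≥ 0 := by
          rw [← hp0]; exact hmono (ht_pos (k+1)).le
        have h2 : p (t k) ≤ K * (t k) ^ s := hpK _ ⟨(ht_pos k).le, ht_le k⟩
        show p (t k) - p (t (k+1)) ≤ K * (t k) ^ s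
        linarith
      calc ∫⁻ u in Set.Ioc (t (k+1)) (t k), ENNReal.ofReal (Real.sqrt (-Real.log u)) ∂μ
          ≤ ∫⁻ _ in Set.Ioc (t (k+1)) (t k), ENNReal.ofReal (c * (t (k+1)) ^ (-ε)) ∂μ :=
            setLIntegral_mono measurable_const fun u hu =>
              ENNReal.ofReal_le_ofReal (hb u hu)
        _ = ENNReal.ofReal (c * (t (k+1)) ^ (-ε)) * μ (Set.Ioc (t (k+1)) (t k)) :=
            setLIntegral_const _ _
        _ ≤ ENNReal.ofReal (c * (t (k+1)) ^ (-ε)) * ENNReal.ofReal (K * (t k) ^ s) :=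
            mul_le_mul_right hmeasc _
        _ = ENNReal.ofReal (c * (t (k+1)) ^ (-ε) * (K * (t k) ^ s)) :=
            (ENNReal.ofReal_mul (by
              have := Real.rpow_pos_of_pos (ht_pos (k+1)) (-ε)
              positivity)).symm
        _ = ENNReal.ofReal (D * r ^ k) := by
            congr 1
            have hwk : (0:ℝ) ≤ w ^ k := by positivity
            have hwk1 : (0:ℝ) ≤ w ^ (k+1) := by positivity
            rw [htdef]
            simp only []
            rw [Real.mul_rpow hh.le hwk1, Real.mul_rpow hh.le hwk,
              pow_rpow_comm hw0.le (-ε) (k+1), pow_rpow_comm hw0.le s k,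
              hDdef, hrdef]
            have e1 : w ^ (-ε) * w ^ s = w ^ (s - ε) := by
              rw [← Real.rpow_add hw0]; ring_nf
            have e2 : h ^ (-ε) * h ^ s = h ^ (s - ε) := by
              rw [← Real.rpow_add hh]; ring_nf
            calc c * (h ^ (-ε) * (w ^ (-ε)) ^ (k+1)) * (K * (h ^ s * (w ^ s) ^ k))
                = (c * K * w ^ (-ε)) * (h ^ (-ε) * h ^ s) * ((w ^ (-ε)) ^ k * (w ^ s) ^ k) := by
                  rw [pow_succ]; ring
              _ = (c * K * w ^ (-ε)) * h ^ (s - ε) * (w ^ (-ε) * w ^ s) ^ k := by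
                  rw [e2, mul_pow]
              _ = c * K * w ^ (-ε) * h ^ (s - ε) * (w ^ (s - ε)) ^ k := by rw [e1]
    calc ∫⁻ u in Set.Ioc (0:ℝ) h, ENNReal.ofReal (Real.sqrt (-Real.log u)) ∂μ
        ≤ ∫⁻ u in ⋃ k : ℕ, Set.Ioc (t (k+1)) (t k),
            ENNReal.ofReal (Real.sqrt (-Real.log u)) ∂μ :=
          lintegral_mono' (Measure.restrict_mono hcover le_rfl) le_rfl
      _ ≤ ∑' k : ℕ, ∫⁻ u in Set.Ioc (t (k+1)) (t k),
            ENNReal.ofReal (Real.sqrt (-Real.log u)) ∂μ :=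
          lintegral_iUnion_le _ _
      _ ≤ ∑' k : ℕ, ENNReal.ofReal (D * r ^ k) := ENNReal.tsum_le_tsum term_bound
      _ = ENNReal.ofReal (∑' k : ℕ, D * r ^ k) := by
          rw [ENNReal.ofReal_tsum_of_nonneg (fun k => by positivity)
            ((summable_geometric_of_lt_one hr0 hr1).mul_left D)]
      _ = ENNReal.ofReal (D * (1 - r)⁻¹) := by
          rw [tsum_mul_left, tsum_geometric_of_lt_one hr0 hr1]
      _ ≤ ENNReal.ofReal (C * h ^ s') := by
          apply ENNReal.ofReal_le_ofReal
          have : D * (1 - r)⁻¹ = C * h ^ (s - ε) := by rw [hDdef, hCdef]; ring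
          rw [this]
          exact mul_le_mul_of_nonneg_left
            (Real.rpow_le_rpow_of_exponent_ge hh hh1 hs'le) hC.le
  refine ENNReal.toReal_le_of_le_ofReal ?_ key
  have : (0:ℝ) < h ^ s' := Real.rpow_pos_of_pos hh _
  positivity
end
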